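/- Let n ≥ 5 be a natural number and S a real number with S > n; set t = (S − n)/S. Let D be a real number with 0 ≤ D ≤ (2/3)·t·S³. Assume (i) t·S²·(S − 2n) ≥ ((4t² − 9t + 3)/(3(1 − t)))·D − 2t²S²/(1 − t), and (ii) 3D ≤ (S + 2·(D/(12(1 − t)) + S³/(4n))^{1/3})·t·S². Then S > 1.8252·n − 0.712898. -/

import Mathlib

set_option maxHeartbeats 2000000 in
theorem stmt_0 (n : ℕ) (hn : 5 ≤ n) (S : ℝ) (hS : (n : ℝ) < S)
    (t : ℝ) (ht : t = (S - n) / S)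
    (D : ℝ) (hD0 : 0 ≤ D) (hD1 : D ≤ 2 / 3 * t * S ^ 3)
    (h1 : t * S ^ 2 * (S - 2 * n) ≥
      (4 * t ^ 2 - 9 * t + 3) / (3 * (1 - t)) * D - 2 * t ^ 2 * S ^ 2 / (1 - t))
    (h2 : 3 * D ≤
      (S + 2 * (D / (12 * (1 - t)) + S ^ 3 / (4 * n)) ^ ((1 : ℝ) / 3)) * t * S ^ 2) :
    S > 1.8252 * n - 0.712898 := by
  set N : ℝ := (n : ℝ) with hNdef
  have hn5 : (5:ℝ) ≤ N := by rw [hNdef]; exact_mod_cast hn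
  have hN0 : (0:ℝ) < N := by linarith
  have hSN : N < S := hS
  have hS0 : (0:ℝ) < S := by linarith
  have hSne : S ≠ 0 := ne_of_gt hS0
  have hNne : N ≠ 0 := ne_of_gt hN0
  by_contra hcon
  push_neg at hcon
  have e0 : t * S ^ 2 = (S - N) * S := by rw [ht]; field_simp
  have e1 : (4 * t ^ 2 - 9 * t + 3) / (3 * (1 - t)) =
      (N * S + 4 * N ^ 2 - 2 * S ^ 2) / (3 * (N * S)) := by
    rw [ht]; field_simp; linear_combination (-2 * S ^ 2 + N * S + 4 * N ^ 2) * mul_inv_cancel₀ hNne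
  have e2 : 2 * t ^ 2 * S ^ 2 / (1 - t) = 2 * S * (S - N) ^ 2 / N := by
    rw [ht]; field_simp; linear_combination (S - N) ^ 2 * mul_inv_cancel₀ hNne
  have e3 : D / (12 * (1 - t)) + S ^ 3 / (4 * N) = S * (D + 3 * S ^ 2) / (12 * N) := by
    rw [ht]; field_simp; linear_combination (4 * D) * mul_inv_cancel₀ hNne
  have e4 : 2 / 3 * t * S ^ 3 = 2 * (S - N) * S ^ 2 / 3 := by rw [ht]; field_simp
  rw [e4] at hD1
  rw [e0, e1, e2] at h1
  rw [e3] at h2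
  set Y : ℝ := (S * (D + 3 * S ^ 2) / (12 * N)) ^ ((1:ℝ)/3) with hYdef
  have key1 : (N * S + 4 * N ^ 2 - 2 * S ^ 2) * D ≤
      3 * (N * S) * ((S - N) * S * (S - 2 * N)) + 6 * S ^ 2 * (S - N) ^ 2 := by
    rw [ge_iff_le, sub_le_iff_le_add, div_mul_eq_mul_div, div_le_iff₀ (by positivity)] at h1
    calc (N * S + 4 * N ^ 2 - 2 * S ^ 2) * D
        ≤ ((S - N) * S * (S - 2 * N) + 2 * S * (S - N) ^ 2 / N) * (3 * (N * S)) := h1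
      _ = 3 * (N * S) * ((S - N) * S * (S - 2 * N)) + 6 * S ^ 2 * (S - N) ^ 2 := by
          field_simp; ring
  have e5 : (S + 2 * Y) * t * S ^ 2 = (S + 2 * Y) * ((S - N) * S) := by
    rw [ht]; field_simp
  rw [e5] at h2
  rcases le_or_gt (2 * S ^ 2 - N * S - 4 * N ^ 2) 0 with hq | hq
  · have hP1 : 0 ≤ (N * S + 4 * N ^ 2 - 2 * S ^ 2) * D :=
      mul_nonneg (by linarith) hD0
    have hW : 0 ≤ N * (S - 2 * N) + 2 * (S - N) := by
      by_contra hW'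
      push_neg at hW'
      nlinarith [key1, hP1, mul_pos (mul_pos (pow_pos hS0 2) (sub_pos.mpr hSN))
        (neg_pos.mpr hW')]
    nlinarith [hW, sq_nonneg (N - 27/10),
      mul_nonneg (by linarith : (0:ℝ) ≤ N + 2)
        (by linarith : (0:ℝ) ≤ 1.8252 * N - 0.712898 - S)]
  · have hP1le : N * S + 4 * N ^ 2 - 2 * S ^ 2 ≤ 0 := by linarith
    rcases le_or_gt S (87 * N / 50) with hS2a | hS2b
    · have hst : (N * S + 4 * N ^ 2 - 2 * S ^ 2) * (2 * (S - N) * S ^ 2 / 3) ≤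
          (N * S + 4 * N ^ 2 - 2 * S ^ 2) * D :=
        mul_le_mul_of_nonpos_left hD1 hP1le
      have hchain := le_trans hst key1
      have hA : 0 ≤ 4 * S ^ 2 + 7 * N * S - 26 * N ^ 2 + 18 * S - 18 * N := by
        by_contra h'
        push_neg at h'
        nlinarith [hchain, mul_pos (mul_pos (pow_pos hS0 2) (sub_pos.mpr hSN))
          (by linarith : (0:ℝ) < -(4 * S ^ 2 + 7 * N * S - 26 * N ^ 2 + 18 * S - 18 * N))]
      nlinarith [hA, hq,
        mul_nonneg (by linarith : (0:ℝ) ≤ 87 * N / 50 - S) (by linarith : (0:ℝ) ≤ S),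
        mul_nonneg (by linarith : (0:ℝ) ≤ 1.8252 * N - 0.712898 - S) (by linarith : (0:ℝ) ≤ N),
        mul_nonneg (by linarith : (0:ℝ) ≤ 1.8252 * N - 0.712898 - S) (by linarith : (0:ℝ) ≤ S),
        mul_nonneg (by linarith : (0:ℝ) ≤ 87 * N / 50 - S) (by linarith : (0:ℝ) ≤ N),
        sq_nonneg (S - N)]
    · set Xm : ℝ := S ^ 3 * (2 * S - 2 * N + 9) / (36 * N) with hXmdef
      have hX0 : (0:ℝ) ≤ S * (D + 3 * S ^ 2) / (12 * N) := by positivity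
      have hXle : S * (D + 3 * S ^ 2) / (12 * N) ≤ Xm := by
        rw [hXmdef, div_le_div_iff₀ (by positivity) (by positivity)]
        nlinarith [mul_nonneg (mul_nonneg hN0.le hS0.le) (sub_nonneg.mpr hD1)]
      have hXm0 : (0:ℝ) ≤ Xm := le_trans hX0 hXle
      set Ym : ℝ := Xm ^ ((1:ℝ)/3) with hYmdef
      have hYle : Y ≤ Ym := by
        rw [hYdef, hYmdef]
        exact Real.rpow_le_rpow hX0 hXle (by norm_num)
      have hSNS : (0:ℝ) < (S - N) * S := mul_pos (sub_pos.mpr hSN) hS0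
      have h2'' : 3 * D ≤ (S + 2 * Ym) * ((S - N) * S) := by
        nlinarith [h2, mul_nonneg (by linarith : (0:ℝ) ≤ Ym - Y) hSNS.le]
      have hstar : (N * S + 4 * N ^ 2 - 2 * S ^ 2) * ((S + 2 * Ym) * ((S - N) * S)) ≤
          3 * (3 * (N * S) * ((S - N) * S * (S - 2 * N)) + 6 * S ^ 2 * (S - N) ^ 2) := by
        have hmm := mul_le_mul_of_nonpos_left h2'' hP1le
        nlinarith [hmm, key1]
      have hm : 0 < 22 * N ^ 2 + 18 * N - 8 * N * S - 2 * S ^ 2 - 18 * S := by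
        nlinarith [mul_nonneg (by linarith : (0:ℝ) ≤ 1.8252 * N - 0.712898 - S)
          (by linarith : (0:ℝ) ≤ 8 * N + 2 * S + 18), sq_nonneg (N - 3), sq_nonneg (N - 5)]
      set m : ℝ := 22 * N ^ 2 + 18 * N - 8 * N * S - 2 * S ^ 2 - 18 * S with hmdef
      set K : ℝ := 2 * (2 * S ^ 2 - N * S - 4 * N ^ 2) * (S - N) * S with hKdef
      have hK : 0 < K := by
        rw [hKdef]
        exact mul_pos (mul_pos (by linarith) (by linarith)) hS0
      have hM : 0 < S ^ 2 * (S - N) * m :=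
        mul_pos (mul_pos (pow_pos hS0 2) (sub_pos.mpr hSN)) hm
      have hKYm : S ^ 2 * (S - N) * m ≤ K * Ym := by
        rw [hKdef, hmdef]
        linarith [hstar]
      have hcore : 2 * (2 * S ^ 2 - N * S - 4 * N ^ 2) ^ 3 * (2 * S - 2 * N + 9) <
          9 * N * m ^ 3 := by
        rw [hmdef]
        have hu : (0:ℝ) ≤ S - 87 * N / 50 := by linarith
        have hv : (0:ℝ) ≤ 1.8252 * N - 0.712898 - S := by linarith
        linarith [mul_nonneg (pow_nonneg hu 0) (pow_nonneg hv 1), mul_nonneg (pow_nonneg hu 0) (pow_nonneg hv 2), mul_nonneg (pow_nonneg hu 0) (pow_nonneg hv 3), mul_nonneg (pow_nonneg hu 0) (pow_nonneg hv 4), mul_nonneg (pow_nonneg hu 0) (pow_nonneg hv 5), mul_nonneg (pow_nonneg hu 0) (pow_nonneg hv 6), mul_nonneg (pow_nonneg hu 0) (pow_nonneg hv 7), mul_nonneg (pow_nonneg hu 1) (pow_nonneg hv 0), mul_nonneg (pow_nonneg hu 1) (pow_nonneg hv 1), mul_nonneg (pow_nonneg hu 1) (pow_nonneg hv 2), mul_nonneg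 (pow_nonneg hu 1) (pow_nonneg hv 3), mul_nonneg (pow_nonneg hu 1) (pow_nonneg hv 4), mul_nonneg (pow_nonneg hu 1) (pow_nonneg hv 5), mul_nonneg (pow_nonneg hu 1) (pow_nonneg hv 6), mul_nonneg (pow_nonneg hu 2) (pow_nonneg hv 0), mul_nonneg (pow_nonneg hu 2) (pow_nonneg hv 1), mul_nonneg (pow_nonneg hu 2) (pow_nonneg hv 2), mul_nonneg (pow_nonneg hu 2) (pow_nonneg hv 3), mul_nonneg (pow_nonneg hu 2) (pow_nonneg hv 4), mul_nonneg (pow_nonneg hu 2) (pow_nonneg hv 5), mul_nonneg (pow_nonneg hu 3) (pow_nonneg hv 0), mul_nonneg (pow_nonneg hu 3) (pow_nonneg hv 1), mul_nonneg (pow_nonneg hu 3) (pow_nonneg hv 2), mul_nonneg (pow_nonneg hu 3) (pow_nonneg hv 3), mul_nonneg (pow_nonneg hu 3) (pow_nonneg hv 4), mul_nonneg (pow_nonneg hu 4) (pow_nonneg hv 0), mul_nonneg (pow_nonneg hu 4) (pow_nonneg hv 1), mul_nonneg (pow_nonneg hu 4) (pow_nonneg hv 2), mul_nonneg (pow_nonneg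 hu 4) (pow_nonneg hv 3), mul_nonneg (pow_nonneg hu 5) (pow_nonneg hv 0), mul_nonneg (pow_nonneg hu 5) (pow_nonneg hv 1), mul_nonneg (pow_nonneg hu 5) (pow_nonneg hv 2), mul_nonneg (pow_nonneg hu 6) (pow_nonneg hv 0), mul_nonneg (pow_nonneg hu 6) (pow_nonneg hv 1), mul_nonneg (pow_nonneg hu 7) (pow_nonneg hv 0)]
      have hfac : (0:ℝ) < S ^ 6 * (S - N) ^ 3 / (9 * N) := by
        have : (0:ℝ) < (S - N) ^ 3 := pow_pos (by linarith) 3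
        positivity
      have hlt : Xm * K ^ 3 < (S ^ 2 * (S - N) * m) ^ 3 := by
        have idL : Xm * K ^ 3 =
            (2 * (2 * S ^ 2 - N * S - 4 * N ^ 2) ^ 3 * (2 * S - 2 * N + 9)) *
              (S ^ 6 * (S - N) ^ 3 / (9 * N)) := by
          rw [hXmdef, hKdef]; field_simp; ring
        have idR : (S ^ 2 * (S - N) * m) ^ 3 =
            (9 * N * m ^ 3) * (S ^ 6 * (S - N) ^ 3 / (9 * N)) := by
          field_simp
        rw [idL, idR]
        exact mul_lt_mul_of_pos_right hcore hfac
      have hMK : Xm < (S ^ 2 * (S - N) * m / K) ^ 3 := by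
        rw [div_pow, lt_div_iff₀ (pow_pos hK 3)]
        exact hlt
      have hYmlt : Ym < S ^ 2 * (S - N) * m / K := by
        have h3 : ((S ^ 2 * (S - N) * m / K) ^ (3:ℕ)) ^ ((1:ℝ)/3) =
            S ^ 2 * (S - N) * m / K := by
          rw [show ((1:ℝ)/3) = ((3:ℕ):ℝ)⁻¹ by norm_num]
          exact Real.pow_rpow_inv_natCast (div_nonneg hM.le hK.le) (by norm_num)
        calc Ym = Xm ^ ((1:ℝ)/3) := hYmdef
          _ < ((S ^ 2 * (S - N) * m / K) ^ (3:ℕ)) ^ ((1:ℝ)/3) :=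
              Real.rpow_lt_rpow hXm0 hMK (by norm_num)
          _ = S ^ 2 * (S - N) * m / K := h3
      have hfin : Ym * K < S ^ 2 * (S - N) * m := (lt_div_iff₀ hK).mp hYmlt
      nlinarith [hKYm, hfin]
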